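/- Let T be a tree whose expanding number satisfies γ_T = 1 (an unexpandable tree). Then for every fixed m ≥ 1, the proportion of vertices in the outer m levels is asymptotically negligible: lim_{n→∞} |Δ_n \ Δ_{n−m}|/|Δ_n| = 0. -/

import Mathlib

open Filter

/-- A (rooted, locally finite) tree realized as a set of finite words over the
`d` generators: it contains the root (the empty word) and is closed under prefixes. -/
def IsTree {d : ℕ} (T : Set (List (Fin d))) : Prop :=
  ([] : List (Fin d)) ∈ T ∧ ∀ w ∈ T, ∀ u : List (Fin d), u <+: w → u ∈ T

/-- `T_n`: the set of vertices of `T` at distance `n` from the root. -/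
def level {d : ℕ} (T : Set (List (Fin d))) (n : ℕ) : Set (List (Fin d)) :=
  {w ∈ T | w.length = n}

/-- `Δ_n = ∪_{i=0}^n T_i`: the set of vertices of `T` at distance at most `n`. -/
def ball {d : ℕ} (T : Set (List (Fin d))) (n : ℕ) : Set (List (Fin d)) :=
  {w ∈ T | w.length ≤ n}

/-- The statement that the expanding number `γ_T = lim_n |T_{n+1}|/|T_n|` exists
and equals `γ`. -/
def HasExpandingNumber {d : ℕ} (T : Set (List (Fin d))) (γ : ℝ) : Prop :=
  Tendsto (fun n : ℕ => ((level T (n + 1)).ncard : ℝ) / ((level T n).ncard : ℝ)) atTop (nhds γ)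

/-- `|P(Δ_n, 𝒯)|`: the number of restrictions of labeled trees of `𝒯` to `Δ_n`. -/
noncomputable def ballBlockCount {d : ℕ} {A : Type*} (T : Set (List (Fin d)))
    (𝒯 : Set (List (Fin d) → A)) (n : ℕ) : ℕ :=
  Set.ncard ((fun t (w : ball T n) => t (w : List (Fin d))) '' 𝒯)

/-- The entropy of a tree-shift, `h(𝒯) = limsup_n log |P(Δ_n,𝒯)| / |Δ_n|`. -/
noncomputable def treeEntropy {d : ℕ} {A : Type*} (T : Set (List (Fin d)))
    (𝒯 : Set (List (Fin d) → A)) : ℝ :=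
  limsup (fun n : ℕ => Real.log (ballBlockCount T 𝒯 n) / ((ball T n).ncard : ℝ)) atTop

/-- `S` is an independence set for `𝒯`: every assignment of symbols on `S`
extends to an element of `𝒯`. -/
def IsIndepSet {I A : Type*} (𝒯 : Set (I → A)) (S : Set I) : Prop :=
  ∀ u : I → A, ∃ t ∈ 𝒯, ∀ w ∈ S, t w = u w

namespace OuterAux

variable {d : ℕ} (T : Set (List (Fin d)))

lemma level_finite (n : ℕ) : (level T n).Finite :=
  (List.finite_length_eq (Fin d) n).subset (fun _ hw => hw.2)

lemma ball_finite (n : ℕ) : (ball T n).Finite :=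
  (List.finite_length_le (Fin d) n).subset (fun _ hw => hw.2)

lemma ball_succ (n : ℕ) : ball T (n + 1) = ball T n ∪ level T (n + 1) := by
  ext w
  simp only [ball, level, Set.mem_setOf_eq, Set.mem_union]
  constructor
  · rintro ⟨h1, h2⟩
    rcases Nat.lt_or_ge w.length (n+1) with h | h
    · exact Or.inl ⟨h1, by omega⟩
    · exact Or.inr ⟨h1, by omega⟩
  · rintro (⟨h1, h2⟩ | ⟨h1, h2⟩) <;> exact ⟨h1, by omega⟩

lemma ncard_ball_succ (n : ℕ) :
    (ball T (n + 1)).ncard = (ball T n).ncard + (level T (n + 1)).ncard := by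
  rw [ball_succ, Set.ncard_union_eq ?_ (ball_finite T n) (level_finite T (n+1))]
  rw [Set.disjoint_iff_forall_ne]
  intro w hw v hv hne
  have h1 : w.length ≤ n := hw.2
  have h2 : v.length = n + 1 := hv.2
  subst hne
  omega

lemma sum_levels_le (K : ℕ) : ∀ n, K ≤ n →
    ∑ j ∈ Finset.range (K + 1), (level T (n - j)).ncard ≤ (ball T n).ncard := by
  induction K with
  | zero =>
    intro n _
    have he : ∑ j ∈ Finset.range (0 + 1), (level T (n - j)).ncard = (level T n).ncard := by
      simp
    rw [he]
    exact Set.ncard_le_ncard (fun w hw => ⟨hw.1, hw.2.le⟩) (ball_finite T n)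
  | succ K ih =>
    intro n hn
    rw [Finset.sum_range_succ']
    have h1 : ∑ j ∈ Finset.range (K + 1), (level T (n - (j + 1))).ncard
        = ∑ j ∈ Finset.range (K + 1), (level T ((n - 1) - j)).ncard := by
      refine Finset.sum_congr rfl fun j _ => ?_
      have hj : n - (j + 1) = n - 1 - j := by omega
      rw [hj]
    rw [h1]
    have h2 := ih (n - 1) (by omega)
    have h3 := ncard_ball_succ T (n - 1)
    have hn1 : n - 1 + 1 = n := by omega
    rw [hn1] at h3
    simp only [Nat.sub_zero]
    omega

lemma diff_ncard_le (m : ℕ) : ∀ n,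
    (ball T n \ ball T (n - m)).ncard ≤ ∑ j ∈ Finset.range m, (level T (n - j)).ncard := by
  induction m with
  | zero => intro n; simp
  | succ m ih =>
    intro n
    rcases Nat.eq_zero_or_pos n with rfl | hn
    · simp
    have hsub : ball T n \ ball T (n - (m + 1)) ⊆
        (ball T (n - 1) \ ball T ((n - 1) - m)) ∪ level T n := by
      rintro w ⟨⟨hwT, hwn⟩, hw2⟩
      simp only [ball, Set.mem_setOf_eq, not_and, not_le] at hw2
      have hlen : n - (m + 1) < w.length := hw2 hwT
      rcases Nat.lt_or_ge w.length n with h | h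
      · left
        refine ⟨⟨hwT, by omega⟩, ?_⟩
        simp only [ball, Set.mem_setOf_eq, not_and, not_le]
        intro _; omega
      · right; exact ⟨hwT, by omega⟩
    calc (ball T n \ ball T (n - (m + 1))).ncard
        ≤ ((ball T (n - 1) \ ball T ((n - 1) - m)) ∪ level T n).ncard :=
          Set.ncard_le_ncard hsub
            (((ball_finite T (n-1)).diff).union (level_finite T n))
      _ ≤ (ball T (n - 1) \ ball T ((n - 1) - m)).ncard + (level T n).ncard :=
          Set.ncard_union_le _ _
      _ ≤ ∑ j ∈ Finset.range m, (level T ((n - 1) - j)).ncard + (level T n).ncard := by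
          exact Nat.add_le_add_right (ih (n - 1)) _
      _ = ∑ j ∈ Finset.range (m + 1), (level T (n - j)).ncard := by
          rw [Finset.sum_range_succ']
          simp only [Nat.sub_zero]
          congr 1
          refine Finset.sum_congr rfl fun j _ => ?_
          have hj : n - 1 - j = n - (j + 1) := by omega
          rw [hj]

end OuterAux

/-- If `T` is an unexpandable tree (`γ_T = 1`, with all levels
nonempty), then for every fixed `m ≥ 1` the proportion of vertices in the outer `m`
levels is asymptotically negligible: `lim_n |Δ_n \ Δ_{n−m}|/|Δ_n| = 0`. -/



theorem outer_levels_negligible_of_unexpandable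
    (d : ℕ) (T : Set (List (Fin d))) (hT : IsTree T)
    (hne : ∀ n : ℕ, (level T n).Nonempty)
    (hγ : HasExpandingNumber T 1) (m : ℕ) (hm : 1 ≤ m) :
    Tendsto (fun n : ℕ => (((ball T n \ ball T (n - m)).ncard : ℝ) / ((ball T n).ncard : ℝ)))
      atTop (nhds 0) := by
  classical
  set a : ℕ → ℝ := fun n => ((level T n).ncard : ℝ) with ha
  have apos : ∀ n, 0 < a n := by
    intro n
    have h0 : 0 < (level T n).ncard := (Set.ncard_pos (OuterAux.level_finite T n)).mpr (hne n)
    simp only [ha]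
    exact_mod_cast h0
  have bpos : ∀ n, 0 < ((ball T n).ncard : ℝ) := by
    intro n
    have hb : (ball T n).Nonempty := ⟨[], hT.1, by simp⟩
    have : 0 < (ball T n).ncard := (Set.ncard_pos (OuterAux.ball_finite T n)).mpr hb
    exact_mod_cast this
  -- ratios at any fixed offset tend to 1
  have ratio_shift : ∀ j : ℕ, Tendsto (fun n => a (n + j) / a n) atTop (nhds 1) := by
    intro j
    induction j with
    | zero =>
      have : (fun n => a (n + 0) / a n) = fun _ => (1 : ℝ) := by
        funext n; simp [div_self (apos n).ne']
      rw [this]; exact tendsto_const_nhds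
    | succ j ih =>
      have h1 : Tendsto (fun n => a (n + j + 1) / a (n + j)) atTop (nhds 1) :=
        hγ.comp (tendsto_add_atTop_nat j)
      have h2 := ih.mul h1
      rw [one_mul] at h2
      refine h2.congr fun n => ?_
      have hne1 := (apos n).ne'
      have hne2 := (apos (n + j)).ne'
      field_simp
      ring
  -- eventual two-sided comparison
  have E : ∀ j : ℕ, ∀ᶠ n in atTop, a (n + j) < 2 * a n ∧ a n < 2 * a (n + j) := by
    intro j
    have hIoo : Set.Ioo (1/2 : ℝ) 2 ∈ nhds (1 : ℝ) := Ioo_mem_nhds (by norm_num) (by norm_num)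
    filter_upwards [(ratio_shift j).eventually hIoo] with n hn
    obtain ⟨h1, h2⟩ := hn
    constructor
    · exact (div_lt_iff₀ (apos n)).mp h2 |>.trans_le (by ring_nf; exact le_refl _)
    · have := (lt_div_iff₀ (apos n)).mp h1
      linarith
  rw [Metric.tendsto_atTop]
  intro ε hε
  obtain ⟨K, hK⟩ := exists_nat_gt (4 * m / ε)
  have hE : ∀ᶠ n in atTop, ∀ j ∈ Finset.range (K + m + 1),
      a (n + j) < 2 * a n ∧ a n < 2 * a (n + j) :=
    (eventually_all_finset _).mpr fun j _ => E j
  obtain ⟨N, hN⟩ := eventually_atTop.mp hE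
  refine ⟨N + K + m, fun n hn => ?_⟩
  -- key pointwise bounds
  have key : ∀ j < K + m + 1, a (n - j) < 2 * a n ∧ a n < 2 * a (n - j) := by
    intro j hj
    have h1 : N ≤ n - j := by omega
    have h2 : n - j + j = n := by omega
    have := hN (n - j) h1 j (Finset.mem_range.mpr hj)
    rw [h2] at this
    exact ⟨this.2, this.1⟩
  -- upper bound for the numerator
  have hnum : ((ball T n \ ball T (n - m)).ncard : ℝ) ≤ (m : ℝ) * (2 * a n) := by
    have hc := OuterAux.diff_ncard_le T m n
    have hc' : ((ball T n \ ball T (n - m)).ncard : ℝ)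
        ≤ ∑ j ∈ Finset.range m, a (n - j) := by
      calc ((ball T n \ ball T (n - m)).ncard : ℝ)
          ≤ ((∑ j ∈ Finset.range m, (level T (n - j)).ncard : ℕ) : ℝ) := by exact_mod_cast hc
        _ = ∑ j ∈ Finset.range m, a (n - j) := by push_cast; rfl
    refine hc'.trans ?_
    calc ∑ j ∈ Finset.range m, a (n - j)
        ≤ ∑ _j ∈ Finset.range m, 2 * a n := by
          refine Finset.sum_le_sum fun j hj => ?_
          exact (key j (by have := Finset.mem_range.mp hj; omega)).1.le
      _ = (m : ℝ) * (2 * a n) := by rw [Finset.sum_const, Finset.card_range, nsmul_eq_mul]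
  -- lower bound for the denominator
  have hden : ((K : ℝ) + 1) * (a n / 2) ≤ ((ball T n).ncard : ℝ) := by
    have hc := OuterAux.sum_levels_le T K n (by omega)
    have hc' : ∑ j ∈ Finset.range (K + 1), a (n - j) ≤ ((ball T n).ncard : ℝ) := by
      calc ∑ j ∈ Finset.range (K + 1), a (n - j)
          = ((∑ j ∈ Finset.range (K + 1), (level T (n - j)).ncard : ℕ) : ℝ) := by
            push_cast; rfl
        _ ≤ ((ball T n).ncard : ℝ) := by exact_mod_cast hc
    refine le_trans ?_ hc'
    calc ((K : ℝ) + 1) * (a n / 2)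
        = ∑ _j ∈ Finset.range (K + 1), a n / 2 := by
          rw [Finset.sum_const, Finset.card_range, nsmul_eq_mul]; push_cast; ring
      _ ≤ ∑ j ∈ Finset.range (K + 1), a (n - j) := by
          refine Finset.sum_le_sum fun j hj => ?_
          have hjlt := Finset.mem_range.mp hj
          have := (key j (by omega)).2
          linarith
  -- conclude
  have hfn : (((ball T n \ ball T (n - m)).ncard : ℝ) / ((ball T n).ncard : ℝ))
      ≤ 4 * m / ((K : ℝ) + 1) := by
    have hdpos : (0 : ℝ) < ((K : ℝ) + 1) * (a n / 2) := by
      have := apos n; positivity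
    calc (((ball T n \ ball T (n - m)).ncard : ℝ) / ((ball T n).ncard : ℝ))
        ≤ ((m : ℝ) * (2 * a n)) / (((K : ℝ) + 1) * (a n / 2)) :=
          div_le_div₀ (by positivity) hnum hdpos hden
      _ = 4 * m / ((K : ℝ) + 1) := by
          have han := (apos n).ne'
          have hK1 : ((K : ℝ) + 1) ≠ 0 := by positivity
          field_simp
          ring
  have hlt : 4 * (m : ℝ) / ((K : ℝ) + 1) < ε := by
    rw [div_lt_iff₀ (by positivity)]
    have h4 : (0 : ℝ) < 4 * m := by
      have : (1 : ℝ) ≤ m := by exact_mod_cast hm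
      linarith
    have hKε : 4 * (m : ℝ) < K * ε := by
      have := (div_lt_iff₀ hε).mp hK
      linarith
    nlinarith
  have hnonneg : (0 : ℝ) ≤ (((ball T n \ ball T (n - m)).ncard : ℝ) / ((ball T n).ncard : ℝ)) := by
    positivity
  rw [Real.dist_eq, sub_zero, abs_of_nonneg hnonneg]
  calc (((ball T n \ ball T (n - m)).ncard : ℝ) / ((ball T n).ncard : ℝ))
      ≤ 4 * m / ((K : ℝ) + 1) := hfn
    _ < ε := hlt
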